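/- Let 𝔚 be a compound wiretap channel over finite alphabets X, Y, Z and let {𝔚_n}_{n∈ℕ} be a sequence of compound wiretap channels over the same alphabets with lim_{n→∞} D(𝔚,𝔚_n) = 0. Then the multi-letter secrecy capacities converge: lim_{n→∞} C_S(𝔚_n) = C_S(𝔚). -/

import Mathlib

open Real Finset

/-- Binary entropy function (base 2). -/
noncomputable def H2 (ε : ℝ) : ℝ :=
  -(ε * Real.logb 2 ε) - (1 - ε) * Real.logb 2 (1 - ε)

/-- `p` is a probability distribution on the finite alphabet `α`. -/
def IsProb {α : Type*} [Fintype α] (p : α → ℝ) : Prop :=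
  (∀ a, 0 ≤ p a) ∧ ∑ a, p a = 1

/-- `W` is a channel (stochastic matrix) from `X` to `Y`. -/
def IsChannel {X Y : Type*} [Fintype Y] (W : X → Y → ℝ) : Prop :=
  ∀ x, (∀ y, 0 ≤ W x y) ∧ ∑ y, W x y = 1

/-- Conditional entropy `H(Y|X‖P)` (base 2) of a joint distribution `P` on `X × Y`. -/
noncomputable def condEnt {X Y : Type*} [Fintype X] [Fintype Y] (P : X × Y → ℝ) : ℝ :=
  -∑ x : X, ∑ y : Y, P (x, y) * Real.logb 2 (P (x, y) / ∑ y' : Y, P (x, y'))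

/-- Mutual information `I(U;Y‖P)` (base 2) of a joint distribution `P` on `U × Y`. -/
noncomputable def mutInf {U Y : Type*} [Fintype U] [Fintype Y] (P : U × Y → ℝ) : ℝ :=
  ∑ u : U, ∑ y : Y,
    P (u, y) * Real.logb 2 (P (u, y) / ((∑ y' : Y, P (u, y')) * ∑ u' : U, P (u', y)))

/-- Channel distance `d(W,W') = max_x ∑_y |W(y|x) − W'(y|x)|`. -/
noncomputable def dChan {X Y : Type*} [Fintype Y] (W W' : X → Y → ℝ) : ℝ :=
  ⨆ x : X, ∑ y : Y, |W x y - W' x y|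

/-- Joint distribution on `U × Yⁿ` induced by the uniform distribution on `U`, a stochastic
encoder `E` and the `n`-fold memoryless extension of the channel `W`. -/
noncomputable def jointOut {X Y U : Type*} [Fintype X] [Fintype U] (n : ℕ)
    (W : X → Y → ℝ) (E : U → (Fin n → X) → ℝ) : U × (Fin n → Y) → ℝ :=
  fun p => ∑ xn : Fin n → X,
    (∏ i : Fin n, W (xn i) (p.2 i)) * E p.1 xn * ((Fintype.card U : ℝ))⁻¹

/-- Distance `D(𝔚₁,𝔚₂)` between two compound wiretap channels. -/
noncomputable def Dcwc {X Y Z : Type*} [Fintype Y] [Fintype Z] {S₁ S₂ : Type*}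
    (W₁ : S₁ → X → Y → ℝ) (V₁ : S₁ → X → Z → ℝ)
    (W₂ : S₂ → X → Y → ℝ) (V₂ : S₂ → X → Z → ℝ) : ℝ :=
  max (max (⨆ s₂ : S₂, ⨅ s₁ : S₁, dChan (W₁ s₁) (W₂ s₂))
           (⨆ s₁ : S₁, ⨅ s₂ : S₂, dChan (W₁ s₁) (W₂ s₂)))
      (max (⨆ s₂ : S₂, ⨅ s₁ : S₁, dChan (V₁ s₁) (V₂ s₂))
           (⨆ s₁ : S₁, ⨅ s₂ : S₂, dChan (V₁ s₁) (V₂ s₂)))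

/-- The per-`n` compound secrecy expression
`F_n(𝔚) = (1/n)·sup_{U,E} ( inf_s I(U;Yⁿ_s) − sup_s I(U;Zⁿ_s) )`, where the supremum ranges
over all finite auxiliary sets `U` (represented by `Fin (k+1)`) and stochastic encoders `E`. -/
noncomputable def secF {X Y Z : Type*} [Fintype X] [Fintype Y] [Fintype Z] {S : Type*}
    (W : S → X → Y → ℝ) (V : S → X → Z → ℝ) (n : ℕ) : ℝ :=
  (1 / (n : ℝ)) * sSup {r : ℝ | ∃ (k : ℕ) (E : Fin (k + 1) → (Fin n → X) → ℝ),
    (∀ u, (∀ xn, 0 ≤ E u xn) ∧ ∑ xn : Fin n → X, E u xn = 1) ∧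
    r = (⨅ s : S, mutInf (jointOut n (W s) E)) - ⨆ s : S, mutInf (jointOut n (V s) E)}

noncomputable def ent {α : Type*} [Fintype α] (p : α → ℝ) : ℝ :=
  -∑ a, p a * Real.logb 2 (p a)

lemma ent_continuous {α : Type*} [Fintype α] : Continuous (ent (α := α)) := by
  unfold ent
  apply Continuous.neg
  apply continuous_finset_sum
  intro a _
  have h : (fun p : α → ℝ => p a * Real.logb 2 (p a))
      = fun p : α → ℝ => (p a * Real.log (p a)) / Real.log 2 := by
    funext p; rw [Real.logb, mul_div_assoc]
  rw [h]
  exact (Real.continuous_mul_log.comp (continuous_apply a)).div_const _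

lemma isProb_le_one {α : Type*} [Fintype α] {p : α → ℝ} (hp : IsProb p) (a : α) :
    p a ≤ 1 := by
  rw [← hp.2]
  exact Finset.single_le_sum (fun b _ => hp.1 b) (mem_univ a)

/-- Uniform continuity of entropy on the simplex. -/
lemma ent_UC (α : Type*) [Fintype α] {ε : ℝ} (hε : 0 < ε) :
    ∃ δ > 0, ∀ p q : α → ℝ, IsProb p → IsProb q →
      (∑ a, |p a - q a|) ≤ δ → |ent p - ent q| ≤ ε := by
  have hK : IsCompact {p : α → ℝ | ∀ a, p a ∈ Set.Icc (0:ℝ) 1} := by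
    have := isCompact_univ_pi (fun _ : α => isCompact_Icc (a := (0:ℝ)) (b := 1))
    convert this using 1
    ext p; simp [Set.mem_univ_pi, Set.mem_Icc, Pi.le_def, forall_and]
  have hu := hK.uniformContinuousOn_of_continuous ent_continuous.continuousOn
  rw [Metric.uniformContinuousOn_iff] at hu
  obtain ⟨δ, hδ, h⟩ := hu ε hε
  refine ⟨δ/2, by linarith, fun p q hp hq htv => ?_⟩
  have hpK : p ∈ {p : α → ℝ | ∀ a, p a ∈ Set.Icc (0:ℝ) 1} :=
    fun a => ⟨hp.1 a, isProb_le_one hp a⟩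
  have hqK : q ∈ {p : α → ℝ | ∀ a, p a ∈ Set.Icc (0:ℝ) 1} :=
    fun a => ⟨hq.1 a, isProb_le_one hq a⟩
  have hd : dist p q ≤ δ/2 := by
    rw [dist_pi_le_iff (by linarith)]
    intro a
    rw [Real.dist_eq]
    calc |p a - q a| ≤ ∑ b, |p b - q b| :=
          Finset.single_le_sum (f := fun b => |p b - q b|) (fun b _ => abs_nonneg _) (mem_univ a)
      _ ≤ δ/2 := htv
  have := h p hpK q hqK (lt_of_le_of_lt hd (by linarith))
  rw [Real.dist_eq] at this
  exact this.le

lemma neg_mul_logb_nonneg {x : ℝ} (h0 : 0 ≤ x) (h1 : x ≤ 1) :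
    0 ≤ -(x * Real.logb 2 x) := by
  rcases eq_or_lt_of_le h0 with h | h
  · simp [← h]
  · have : Real.logb 2 x ≤ 0 := Real.logb_nonpos (by norm_num) h0 h1
    nlinarith

lemma neg_mul_logb_le_two {x : ℝ} (h0 : 0 ≤ x) (h1 : x ≤ 1) :
    -(x * Real.logb 2 x) ≤ 2 := by
  rcases eq_or_lt_of_le h0 with h | h
  · simp [← h]
  · have hlog : Real.log (1/x) ≤ 1/x - 1 := Real.log_le_sub_one_of_pos (by positivity)
    rw [Real.log_div one_ne_zero (ne_of_gt h), Real.log_one] at hlog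
    have hx : -(x * Real.log x) ≤ 1 - x := by
      have h2 := mul_le_mul_of_nonneg_left hlog h0
      have h3 : x * (1/x) = 1 := by field_simp
      nlinarith
    have hlog2 : (0.6931471803 : ℝ) < Real.log 2 := Real.log_two_gt_d9
    have : -(x * Real.logb 2 x) = (-(x * Real.log x)) / Real.log 2 := by
      rw [Real.logb]; ring
    rw [this, div_le_iff₀ (by linarith)]
    nlinarith

lemma ent_nonneg {α : Type*} [Fintype α] {p : α → ℝ}
    (h0 : ∀ a, 0 ≤ p a) (h1 : ∀ a, p a ≤ 1) : 0 ≤ ent p := by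
  unfold ent
  rw [← Finset.sum_neg_distrib]
  exact Finset.sum_nonneg fun a _ => neg_mul_logb_nonneg (h0 a) (h1 a)

lemma ent_le {α : Type*} [Fintype α] {p : α → ℝ}
    (h0 : ∀ a, 0 ≤ p a) (h1 : ∀ a, p a ≤ 1) :
    ent p ≤ 2 * Fintype.card α := by
  unfold ent
  rw [← Finset.sum_neg_distrib]
  calc ∑ a, -(p a * Real.logb 2 (p a)) ≤ ∑ _a : α, (2:ℝ) :=
        Finset.sum_le_sum fun a _ => neg_mul_logb_le_two (h0 a) (h1 a)
    _ = 2 * Fintype.card α := by simp [mul_comm]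

lemma ent_comp_equiv {α β : Type*} [Fintype α] [Fintype β] (e : α ≃ β) (p : β → ℝ) :
    ent (p ∘ e) = ent p := by
  unfold ent
  congr 1
  exact Fintype.sum_equiv e _ _ (fun a => rfl)

lemma sum_pi_succ {β : Type*} [Fintype β] {m : ℕ} (f : (Fin (m+1) → β) → ℝ) :
    ∑ y, f y = ∑ a : β, ∑ t : Fin m → β, f (Fin.cons a t) := by
  rw [← Equiv.sum_comp (Fin.consEquiv (fun _ => β)) f, Fintype.sum_prod_type]
  rfl

/-- Output distribution of an `m`-letter input through per-letter channels `K`. -/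
noncomputable def out {X Y : Type*} [Fintype X] (m : ℕ)
    (K : Fin m → X → Y → ℝ) (μ : (Fin m → X) → ℝ) : (Fin m → Y) → ℝ :=
  fun y => ∑ x : Fin m → X, μ x * ∏ i, K i (x i) (y i)

lemma out_nonneg {X Y : Type*} [Fintype X] {m : ℕ}
    {K : Fin m → X → Y → ℝ} {μ : (Fin m → X) → ℝ}
    (hK : ∀ i x y, 0 ≤ K i x y) (hμ : ∀ x, 0 ≤ μ x) (y : Fin m → Y) :
    0 ≤ out m K μ y :=
  Finset.sum_nonneg fun x _ => mul_nonneg (hμ x) (Finset.prod_nonneg fun i _ => hK i _ _)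

lemma out_succ {X Y : Type*} [Fintype X] {m : ℕ}
    (K : Fin (m+1) → X → Y → ℝ) (μ : (Fin (m+1) → X) → ℝ) (a : Y) (t : Fin m → Y) :
    out (m+1) K μ (Fin.cons a t)
      = out m (fun i => K i.succ)
          (fun xt => ∑ x0 : X, μ (Fin.cons x0 xt) * K 0 x0 a) t := by
  unfold out
  have h := sum_pi_succ (fun x : Fin (m+1) → X => μ x * ∏ i, K i (x i) ((Fin.cons a t : Fin (m+1) → Y) i))
  rw [h, Finset.sum_comm]
  refine Finset.sum_congr rfl fun xt _ => ?_
  rw [Finset.sum_mul]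
  refine Finset.sum_congr rfl fun x0 _ => ?_
  rw [Fin.prod_univ_succ]
  simp only [Fin.cons_zero, Fin.cons_succ]
  ring

lemma sum_out {X Y : Type*} [Fintype X] [Fintype Y] :
    ∀ (m : ℕ) (K : Fin m → X → Y → ℝ), (∀ i, IsChannel (K i)) →
      ∀ (μ : (Fin m → X) → ℝ), ∑ y, out m K μ y = ∑ x, μ x := by
  intro m
  induction m with
  | zero =>
    intro K _ μ
    unfold out
    simp
  | succ m ih =>
    intro K hK μ
    rw [sum_pi_succ (out (m+1) K μ)]
    have h1 : ∀ a t, out (m+1) K μ (Fin.cons a t)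
        = out m (fun i => K i.succ) (fun xt => ∑ x0 : X, μ (Fin.cons x0 xt) * K 0 x0 a) t :=
      out_succ K μ
    calc ∑ a : Y, ∑ t, out (m+1) K μ (Fin.cons a t)
        = ∑ a : Y, ∑ xt : Fin m → X, ∑ x0 : X, μ (Fin.cons x0 xt) * K 0 x0 a := by
          refine Finset.sum_congr rfl fun a _ => ?_
          rw [Finset.sum_congr rfl (fun t _ => h1 a t),
            ih (fun i => K i.succ) (fun i => hK i.succ)]
      _ = ∑ xt : Fin m → X, ∑ x0 : X, μ (Fin.cons x0 xt) * ∑ a : Y, K 0 x0 a := by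
          rw [Finset.sum_comm]
          refine Finset.sum_congr rfl fun xt _ => ?_
          rw [Finset.sum_comm]
          refine Finset.sum_congr rfl fun x0 _ => ?_
          rw [Finset.mul_sum]
      _ = ∑ xt : Fin m → X, ∑ x0 : X, μ (Fin.cons x0 xt) := by
          refine Finset.sum_congr rfl fun xt _ => Finset.sum_congr rfl fun x0 _ => ?_
          rw [(hK 0 x0).2, mul_one]
      _ = ∑ x, μ x := by
          rw [sum_pi_succ μ]
          exact Finset.sum_comm

/-- Chain rule for entropy on a product type. -/
lemma ent_prod {A B : Type*} [Fintype A] [Fintype B] (P : A × B → ℝ)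
    (h0 : ∀ p, 0 ≤ P p) :
    ent P = ent (fun a => ∑ b, P (a, b))
      + ∑ a, (∑ b, P (a, b)) * ent (fun b => P (a, b) / ∑ b', P (a, b')) := by
  unfold ent
  rw [Fintype.sum_prod_type]
  have key : ∀ a : A, ∑ b, P (a, b) * Real.logb 2 (P (a, b))
      = (∑ b, P (a, b)) * Real.logb 2 (∑ b, P (a, b))
        + ∑ b, P (a, b) * Real.logb 2 (P (a, b) / ∑ b', P (a, b')) := by
    intro a
    set s := ∑ b, P (a, b) with hs
    have hs0 : ∀ b, P (a, b) ≤ s := fun b =>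
      Finset.single_le_sum (f := fun b => P (a, b)) (fun c _ => h0 _) (mem_univ b)
    have step : ∀ b, P (a, b) * Real.logb 2 (P (a, b))
        = P (a, b) * Real.logb 2 s + P (a, b) * Real.logb 2 (P (a, b) / s) := by
      intro b
      rcases eq_or_lt_of_le (h0 (a, b)) with h | h
      · simp [← h]
      · have hspos : 0 < s := lt_of_lt_of_le h (hs0 b)
        have : P (a, b) = s * (P (a, b) / s) := by field_simp
        rw [← mul_add, ← Real.logb_mul (ne_of_gt hspos) (by positivity), ← this]
    rw [Finset.sum_congr rfl (fun b _ => step b), Finset.sum_add_distrib, ← Finset.sum_mul]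
  rw [Finset.sum_congr rfl (fun a _ => key a)]
  rw [Finset.sum_add_distrib, neg_add]
  congr 1
  rw [← Finset.sum_neg_distrib]
  refine Finset.sum_congr rfl fun a _ => ?_
  show -∑ b, P (a, b) * Real.logb 2 (P (a, b) / ∑ b', P (a, b'))
      = (∑ b, P (a, b)) * -(∑ b, (P (a, b) / ∑ b', P (a, b')) * Real.logb 2 (P (a, b) / ∑ b', P (a, b')))
  rw [mul_neg]
  congr 1
  set s := ∑ b, P (a, b) with hs
  rcases eq_or_ne s 0 with h | h
  · have hz : ∀ b, P (a, b) = 0 := fun b =>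
      (Finset.sum_eq_zero_iff_of_nonneg (fun c _ => h0 (a, c))).1 h b (mem_univ b)
    simp [hz, h]
  · rw [Finset.mul_sum]
    refine Finset.sum_congr rfl fun b _ => ?_
    rw [← mul_assoc, mul_div_cancel₀ _ h]

/-- Comparison of entropies of two joints with equal first marginals via
conditional entropy comparison. -/
lemma ent_compare {A B : Type*} [Fintype A] [Fintype B] (P P' : A × B → ℝ) (c : ℝ)
    (hc : 0 ≤ c) (h0 : ∀ p, 0 ≤ P p) (h0' : ∀ p, 0 ≤ P' p)
    (hmarg : ∀ a, ∑ b, P (a, b) = ∑ b, P' (a, b))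
    (hsum : ∑ a, ∑ b, P (a, b) = 1)
    (hcond : ∀ a, (∑ b, P (a, b)) ≠ 0 →
      |ent (fun b => P (a, b) / ∑ b', P (a, b'))
        - ent (fun b => P' (a, b) / ∑ b', P' (a, b'))| ≤ c) :
    |ent P - ent P'| ≤ c := by
  rw [ent_prod P h0, ent_prod P' h0']
  have hdiff : ∀ a, ((∑ b, P (a, b)) * ent (fun b => P (a, b) / ∑ b', P (a, b'))
      - (∑ b, P (a, b)) * ent (fun b => P' (a, b) / ∑ b', P' (a, b')))
      = (∑ b, P (a, b)) * (ent (fun b => P (a, b) / ∑ b', P (a, b'))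
          - ent (fun b => P' (a, b) / ∑ b', P' (a, b'))) := fun a => by ring
  have key : |∑ a, (∑ b, P (a, b)) * ent (fun b => P (a, b) / ∑ b', P (a, b'))
      - ∑ a, (∑ b, P (a, b)) * ent (fun b => P' (a, b) / ∑ b', P' (a, b'))| ≤ c := by
    rw [← Finset.sum_sub_distrib]
    rw [Finset.sum_congr rfl (fun a _ => hdiff a)]
    calc |∑ a, (∑ b, P (a, b)) * (ent (fun b => P (a, b) / ∑ b', P (a, b'))
            - ent (fun b => P' (a, b) / ∑ b', P' (a, b')))|
        ≤ ∑ a, |(∑ b, P (a, b)) * (ent (fun b => P (a, b) / ∑ b', P (a, b'))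
            - ent (fun b => P' (a, b) / ∑ b', P' (a, b')))| :=
          Finset.abs_sum_le_sum_abs _ _
      _ ≤ ∑ a, (∑ b, P (a, b)) * c := by
          refine Finset.sum_le_sum fun a _ => ?_
          rw [abs_mul, abs_of_nonneg (Finset.sum_nonneg fun b _ => h0 (a, b))]
          rcases eq_or_ne (∑ b, P (a, b)) 0 with h | h
          · rw [h]; simp
          · exact mul_le_mul_of_nonneg_left (hcond a h)
              (Finset.sum_nonneg fun b _ => h0 (a, b))
      _ = c := by rw [← Finset.sum_mul, hsum, one_mul]
  have he := congrArg (ent (α := A)) (funext hmarg)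
  rw [← he]
  have hS2 : ∑ a, (∑ b, P' (a, b)) * ent (fun b => P' (a, b) / ∑ b', P' (a, b'))
      = ∑ a, (∑ b, P (a, b)) * ent (fun b => P' (a, b) / ∑ b', P' (a, b')) :=
    Finset.sum_congr rfl fun a _ => by rw [hmarg a]
  rw [hS2]
  have h3 : ∀ x s1 s2 : ℝ, x + s1 - (x + s2) = s1 - s2 := by intros; ring
  rw [h3]
  exact key

lemma ent_swap {A B : Type*} [Fintype A] [Fintype B] (P : A × B → ℝ) :
    ent (fun q : B × A => P (q.2, q.1)) = ent P := by
  have : (fun q : B × A => P (q.2, q.1)) = P ∘ (Equiv.prodComm B A) := by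
    funext q; rfl
  rw [this]
  unfold ent
  congr 1
  exact Fintype.sum_equiv (Equiv.prodComm B A) _ _ (fun q => rfl)

lemma out_div {X Y : Type*} [Fintype X] {m : ℕ} (K : Fin m → X → Y → ℝ)
    (μ : (Fin m → X) → ℝ) (c : ℝ) :
    (fun t => out m K μ t / c) = out m K (fun x => μ x / c) := by
  funext t
  unfold out
  rw [Finset.sum_div]
  exact Finset.sum_congr rfl fun x _ => by ring

lemma sum_out_family {X Y : Type*} [Fintype X] {m : ℕ} {A : Type*} [Fintype A]
    (K : Fin m → X → Y → ℝ) (w : A → (Fin m → X) → ℝ) (t : Fin m → Y) :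
    ∑ a : A, out m K (w a) t = out m K (fun x => ∑ a : A, w a x) t := by
  unfold out
  rw [Finset.sum_comm]
  exact Finset.sum_congr rfl fun x _ => by rw [← Finset.sum_mul]

lemma out_ent_cont {X Y : Type*} [Fintype X] [Fintype Y] {δ ω : ℝ} (hω : 0 ≤ ω)
    (hmod : ∀ p q : Y → ℝ, IsProb p → IsProb q → (∑ y, |p y - q y|) ≤ δ →
      |ent p - ent q| ≤ ω) :
    ∀ (m : ℕ) (K K' : Fin m → X → Y → ℝ), (∀ i, IsChannel (K i)) →
      (∀ i, IsChannel (K' i)) → (∀ i x, (∑ y, |K i x y - K' i x y|) ≤ δ) →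
      ∀ μ : (Fin m → X) → ℝ, IsProb μ →
      |ent (out m K μ) - ent (out m K' μ)| ≤ m * ω := by
  intro m
  induction m with
  | zero =>
    intro K K' _ _ _ μ hμ
    have h1 : out 0 K μ = fun _ => (1:ℝ) := by
      funext y; unfold out; simpa using hμ.2
    have h2 : out 0 K' μ = fun _ => (1:ℝ) := by
      funext y; unfold out; simpa using hμ.2
    rw [h1, h2]
    simp
  | succ m ih =>
    intro K K' hK hK' hd μ hμ
    have hKnn : ∀ (N : Fin (m+1) → X → Y → ℝ), (∀ i, IsChannel (N i)) →
        ∀ i x y, 0 ≤ N i x y := fun N hN i x y => (hN i x).1 y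
    set M : Fin (m+1) → X → Y → ℝ := Fin.cons (K 0) (fun i => K' i.succ) with hMdef
    have hM0 : M 0 = K 0 := Fin.cons_zero _ _
    have hMs : ∀ i : Fin m, M i.succ = K' i.succ := fun i => Fin.cons_succ _ _ i
    have hMtail : (fun i : Fin m => M i.succ) = fun i : Fin m => K' i.succ := funext hMs
    have hMchan : ∀ i, IsChannel (M i) := by
      intro i
      refine Fin.cases ?_ ?_ i
      · rw [hM0]; exact hK 0
      · intro j; rw [hMs j]; exact hK' j.succ
    -- joint on Y × (Fin m → Y)
    set J : (Fin (m+1) → X → Y → ℝ) → Y × (Fin m → Y) → ℝ :=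
      fun N q => out (m+1) N μ (Fin.cons q.1 q.2) with hJdef
    have entJ : ∀ N : Fin (m+1) → X → Y → ℝ, ent (J N) = ent (out (m+1) N μ) := by
      intro N
      have : J N = (out (m+1) N μ) ∘ (Fin.consEquiv fun _ => Y) := rfl
      rw [this, ent_comp_equiv]
    -- head-conditional weights
    set w : (Fin (m+1) → X → Y → ℝ) → Y → (Fin m → X) → ℝ :=
      fun N a xt => ∑ x0 : X, μ (Fin.cons x0 xt) * N 0 x0 a with hwdef
    have hJeq : ∀ N a t, J N (a, t) = out m (fun i => N i.succ) (w N a) t :=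
      fun N a t => out_succ N μ a t
    have hwnn : ∀ (N : Fin (m+1) → X → Y → ℝ), (∀ i, IsChannel (N i)) →
        ∀ a xt, 0 ≤ w N a xt := fun N hN a xt =>
      Finset.sum_nonneg fun x0 _ => mul_nonneg (hμ.1 _) ((hN 0 x0).1 a)
    have hwM : w M = w K := by
      funext a xt
      simp only [hwdef, hM0]
    -- marginals over the tail
    have hmargA : ∀ (N : Fin (m+1) → X → Y → ℝ), (∀ i, IsChannel (N i)) →
        ∀ a, ∑ t : Fin m → Y, J N (a, t) = ∑ xt : Fin m → X, w N a xt := by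
      intro N hN a
      rw [Finset.sum_congr rfl (fun t _ => hJeq N a t)]
      exact sum_out m (fun i => N i.succ) (fun i => hN i.succ) (w N a)
    have hsumJ : ∀ (N : Fin (m+1) → X → Y → ℝ),
        ∑ a : Y, ∑ t : Fin m → Y, J N (a, t) = ∑ y, out (m+1) N μ y := by
      intro N
      rw [sum_pi_succ (out (m+1) N μ)]
    have hsumJ1 : ∀ (N : Fin (m+1) → X → Y → ℝ), (∀ i, IsChannel (N i)) →
        ∑ a : Y, ∑ t : Fin m → Y, J N (a, t) = 1 := by
      intro N hN
      rw [hsumJ N, sum_out (m+1) N hN μ, hμ.2]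
    -- Step A : change the tail channels, keep the head
    have stepA : |ent (J K) - ent (J M)| ≤ m * ω := by
      refine ent_compare (J K) (J M) (m * ω)
        (mul_nonneg (Nat.cast_nonneg m) hω)
        (fun q => out_nonneg (hKnn K hK) hμ.1 _)
        (fun q => out_nonneg (hKnn M hMchan) hμ.1 _)
        (fun a => ?_) (hsumJ1 K hK) (fun a hne => ?_)
      · rw [hmargA K hK a, hmargA M hMchan a, hwM]
      · have hsK := hmargA K hK a
        have hsM := hmargA M hMchan a
        rw [hsK] at hne ⊢
        rw [hsM, hwM]
        set s := ∑ xt : Fin m → X, w K a xt with hsdef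
        have hs0 : 0 ≤ s := Finset.sum_nonneg fun xt _ => hwnn K hK a xt
        have hcondK : (fun t => J K (a, t) / s)
            = out m (fun i => K i.succ) (fun xt => w K a xt / s) := by
          rw [← out_div]
          funext t
          rw [hJeq K a t]
        have hcondM : (fun t => J M (a, t) / s)
            = out m (fun i => K' i.succ) (fun xt => w K a xt / s) := by
          rw [← out_div]
          funext t
          rw [hJeq M a t, hMtail, hwM]
        rw [hcondK, hcondM]
        exact ih (fun i => K i.succ) (fun i => K' i.succ) (fun i => hK i.succ)
          (fun i => hK' i.succ) (fun i x => hd i.succ x)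
          (fun xt => w K a xt / s)
          ⟨fun xt => div_nonneg (hwnn K hK a xt) hs0,
           by rw [← Finset.sum_div, ← hsdef, div_self hne]⟩
    -- Step B : change the head channel, keep the tail
    have stepB : |ent (J M) - ent (J K')| ≤ ω := by
      rw [← ent_swap (J M), ← ent_swap (J K')]
      have hmargB : ∀ t : Fin m → Y, ∑ a : Y, J M (a, t) = ∑ a : Y, J K' (a, t) := by
        intro t
        have h1 : ∀ (N : Fin (m+1) → X → Y → ℝ), (∀ i, IsChannel (N i)) →
            ∑ a : Y, J N (a, t)
              = out m (fun i => N i.succ) (fun xt => ∑ x0 : X, μ (Fin.cons x0 xt)) t := by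
          intro N hN
          rw [Finset.sum_congr rfl (fun a _ => hJeq N a t), sum_out_family]
          congr 1
          funext xt
          rw [Finset.sum_comm]
          refine Finset.sum_congr rfl fun x0 _ => ?_
          rw [← Finset.mul_sum, (hN 0 x0).2, mul_one]
        rw [h1 M hMchan, h1 K' hK', hMtail]
      have hdB : ∀ t : Fin m → Y,
          ∑ a : Y, |J M (a, t) - J K' (a, t)| ≤ δ * ∑ a : Y, J M (a, t) := by
        intro t
        have hdiff : ∀ a, J M (a, t) - J K' (a, t)
            = ∑ xt : Fin m → X, (w M a xt - w K' a xt)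
                * ∏ i : Fin m, K' i.succ (xt i) (t i) := by
          intro a
          rw [hJeq M a t, hJeq K' a t, hMtail]
          unfold out
          rw [← Finset.sum_sub_distrib]
          exact Finset.sum_congr rfl fun xt _ => by ring
        have habs : ∀ a, |J M (a, t) - J K' (a, t)|
            ≤ ∑ xt : Fin m → X, (∑ x0 : X, μ (Fin.cons x0 xt) * |K 0 x0 a - K' 0 x0 a|)
                * ∏ i : Fin m, K' i.succ (xt i) (t i) := by
          intro a
          rw [hdiff a]
          refine le_trans (Finset.abs_sum_le_sum_abs _ _) (Finset.sum_le_sum fun xt _ => ?_)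
          rw [abs_mul, abs_of_nonneg (Finset.prod_nonneg fun (i : Fin m) _ => (hK' i.succ _).1 _)]
          refine mul_le_mul_of_nonneg_right ?_
            (Finset.prod_nonneg fun (i : Fin m) _ => (hK' i.succ _).1 _)
          have : w M a xt - w K' a xt
              = ∑ x0 : X, μ (Fin.cons x0 xt) * (K 0 x0 a - K' 0 x0 a) := by
            simp only [hwdef, hM0, ← Finset.sum_sub_distrib]
            exact Finset.sum_congr rfl fun x0 _ => by ring
          rw [this]
          refine le_trans (Finset.abs_sum_le_sum_abs _ _) (Finset.sum_le_sum fun x0 _ => ?_)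
          rw [abs_mul, abs_of_nonneg (hμ.1 _)]
        calc ∑ a : Y, |J M (a, t) - J K' (a, t)|
            ≤ ∑ a : Y, ∑ xt : Fin m → X,
                (∑ x0 : X, μ (Fin.cons x0 xt) * |K 0 x0 a - K' 0 x0 a|)
                * ∏ i : Fin m, K' i.succ (xt i) (t i) :=
              Finset.sum_le_sum fun a _ => habs a
          _ = ∑ xt : Fin m → X, ∑ x0 : X, μ (Fin.cons x0 xt)
                * (∑ a : Y, |K 0 x0 a - K' 0 x0 a|)
                * ∏ i : Fin m, K' i.succ (xt i) (t i) := by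
              rw [Finset.sum_comm]
              refine Finset.sum_congr rfl fun xt _ => ?_
              calc ∑ a : Y, (∑ x0 : X, μ (Fin.cons x0 xt) * |K 0 x0 a - K' 0 x0 a|)
                    * ∏ i : Fin m, K' i.succ (xt i) (t i)
                  = ∑ a : Y, ∑ x0 : X, μ (Fin.cons x0 xt) * |K 0 x0 a - K' 0 x0 a|
                    * ∏ i : Fin m, K' i.succ (xt i) (t i) :=
                    Finset.sum_congr rfl fun a _ => Finset.sum_mul _ _ _
                _ = ∑ x0 : X, ∑ a : Y, μ (Fin.cons x0 xt) * |K 0 x0 a - K' 0 x0 a|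
                    * ∏ i : Fin m, K' i.succ (xt i) (t i) := Finset.sum_comm
                _ = ∑ x0 : X, μ (Fin.cons x0 xt) * (∑ a : Y, |K 0 x0 a - K' 0 x0 a|)
                    * ∏ i : Fin m, K' i.succ (xt i) (t i) := by
                    refine Finset.sum_congr rfl fun x0 _ => ?_
                    rw [Finset.mul_sum, Finset.sum_mul]
          _ ≤ ∑ xt : Fin m → X, ∑ x0 : X, μ (Fin.cons x0 xt) * δ
                * ∏ i : Fin m, K' i.succ (xt i) (t i) := by
              refine Finset.sum_le_sum fun xt _ => Finset.sum_le_sum fun x0 _ => ?_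
              refine mul_le_mul_of_nonneg_right ?_
                (Finset.prod_nonneg fun i _ => (hK' i.succ _).1 _)
              exact mul_le_mul_of_nonneg_left (hd 0 x0) (hμ.1 _)
          _ = δ * ∑ a : Y, J M (a, t) := by
              have h1 : ∑ a : Y, J M (a, t)
                  = ∑ xt : Fin m → X, (∑ x0 : X, μ (Fin.cons x0 xt))
                      * ∏ i : Fin m, K' i.succ (xt i) (t i) := by
                rw [Finset.sum_congr rfl (fun a _ => hJeq M a t), sum_out_family, hMtail]
                unfold out
                refine Finset.sum_congr rfl fun xt _ => ?_
                congr 1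
                simp only [hwdef]
                rw [Finset.sum_comm]
                refine Finset.sum_congr rfl fun x0 _ => ?_
                rw [← Finset.mul_sum, hM0, (hK 0 x0).2, mul_one]
              rw [h1, Finset.mul_sum]
              refine Finset.sum_congr rfl fun xt _ => ?_
              rw [Finset.sum_mul, Finset.mul_sum]
              exact Finset.sum_congr rfl fun x0 _ => by ring
      refine ent_compare (fun q : (Fin m → Y) × Y => J M (q.2, q.1))
        (fun q : (Fin m → Y) × Y => J K' (q.2, q.1)) ω hω
        (fun q => out_nonneg (hKnn M hMchan) hμ.1 _)
        (fun q => out_nonneg (hKnn K' hK') hμ.1 _)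
        (fun t => hmargB t)
        (by rw [Finset.sum_comm]; exact hsumJ1 M hMchan)
        (fun t hne => ?_)
      have hq0 : 0 < ∑ a : Y, J M (a, t) :=
        lt_of_le_of_ne (Finset.sum_nonneg fun a _ =>
          out_nonneg (hKnn M hMchan) hμ.1 _) (Ne.symm hne)
      rw [← hmargB t]
      refine hmod _ _
        ⟨fun a => div_nonneg (out_nonneg (hKnn M hMchan) hμ.1 _) hq0.le,
         by rw [← Finset.sum_div, div_self hne]⟩
        ⟨fun a => div_nonneg (out_nonneg (hKnn K' hK') hμ.1 _) hq0.le,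
         by rw [← Finset.sum_div, hmargB t, div_self (by rw [← hmargB t]; exact hne)]⟩
        ?_
      calc ∑ a : Y, |J M (a, t) / (∑ a' : Y, J M (a', t))
              - J K' (a, t) / (∑ a' : Y, J M (a', t))|
          = (∑ a : Y, |J M (a, t) - J K' (a, t)|) / (∑ a' : Y, J M (a', t)) := by
            rw [Finset.sum_div]
            refine Finset.sum_congr rfl fun a _ => ?_
            rw [div_sub_div_same, abs_div, abs_of_pos hq0]
        _ ≤ δ := by
            rw [div_le_iff₀ hq0]
            exact hdB t
    -- combine
    rw [← entJ K, ← entJ K']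
    calc |ent (J K) - ent (J K')| ≤ |ent (J K) - ent (J M)| + |ent (J M) - ent (J K')| :=
          abs_sub_le _ _ _
      _ ≤ m * ω + ω := add_le_add stepA stepB
      _ = ((m + 1 : ℕ) : ℝ) * ω := by push_cast; ring

lemma jointOut_eq {X Y U : Type*} [Fintype X] [Fintype U] (n : ℕ)
    (Wc : X → Y → ℝ) (E : U → (Fin n → X) → ℝ) (u : U) (y : Fin n → Y) :
    jointOut n Wc E (u, y) = (Fintype.card U : ℝ)⁻¹ * out n (fun _ => Wc) (E u) y := by
  unfold jointOut out
  rw [Finset.mul_sum]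
  exact Finset.sum_congr rfl fun x _ => by ring

lemma mutInf_jointOut {X Y : Type*} [Fintype X] [Fintype Y] {k n : ℕ}
    (Wc : X → Y → ℝ) (hWc : IsChannel Wc) (E : Fin (k+1) → (Fin n → X) → ℝ)
    (hE : ∀ u, IsProb (E u)) :
    mutInf (jointOut n Wc E)
      = ent (fun y => (Fintype.card (Fin (k+1)) : ℝ)⁻¹ * ∑ u, out n (fun _ => Wc) (E u) y)
        - (Fintype.card (Fin (k+1)) : ℝ)⁻¹ * ∑ u, ent (out n (fun _ => Wc) (E u)) := by
  set cU : ℝ := (Fintype.card (Fin (k+1)) : ℝ) with hcU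
  have hc : 0 < cU := by rw [hcU]; positivity
  set q : Fin (k+1) → (Fin n → Y) → ℝ := fun u => out n (fun _ => Wc) (E u) with hq
  have hqnn : ∀ u y, 0 ≤ q u y := fun u y =>
    out_nonneg (fun _ x b => (hWc x).1 b) (hE u).1 y
  have hq1 : ∀ u, ∑ y, q u y = 1 := fun u => by
    rw [hq]
    rw [sum_out n (fun _ => Wc) (fun _ => hWc) (E u), (hE u).2]
  set qb : (Fin n → Y) → ℝ := fun y => cU⁻¹ * ∑ u, q u y with hqb
  have hmargU : ∀ u, ∑ y', jointOut n Wc E (u, y') = cU⁻¹ := by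
    intro u
    rw [Finset.sum_congr rfl (fun y' _ => jointOut_eq n Wc E u y'), ← Finset.mul_sum,
      hq1 u, mul_one]
  have hmargY : ∀ y, ∑ u', jointOut n Wc E (u', y) = qb y := by
    intro y
    rw [Finset.sum_congr rfl (fun u' _ => jointOut_eq n Wc E u' y), ← Finset.mul_sum]
  have hqble : ∀ u y, cU⁻¹ * q u y ≤ qb y := by
    intro u y
    rw [hqb]
    exact mul_le_mul_of_nonneg_left
      (Finset.single_le_sum (f := fun u' => q u' y) (fun u' _ => hqnn u' y) (mem_univ u))
      (by positivity)
  have term : ∀ u y, jointOut n Wc E (u, y)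
      * Real.logb 2 (jointOut n Wc E (u, y)
        / ((∑ y', jointOut n Wc E (u, y')) * ∑ u', jointOut n Wc E (u', y)))
      = cU⁻¹ * (q u y * Real.logb 2 (q u y) - q u y * Real.logb 2 (qb y)) := by
    intro u y
    rw [hmargU u, hmargY y, jointOut_eq n Wc E u y]
    have hout : out n (fun _ => Wc) (E u) y = q u y := rfl
    rw [hout]
    rcases eq_or_lt_of_le (hqnn u y) with h | h
    · rw [← h]; simp
    · have hqb0 : 0 < qb y := lt_of_lt_of_le (by positivity) (hqble u y)
      have hr : cU⁻¹ * q u y / (cU⁻¹ * qb y) = q u y / qb y :=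
        mul_div_mul_left _ _ (by positivity)
      rw [hr, Real.logb_div (ne_of_gt h) (ne_of_gt hqb0)]
      ring
  unfold mutInf
  rw [Finset.sum_congr rfl (fun u _ => Finset.sum_congr rfl (fun y _ => term u y))]
  have split : ∀ u, ∑ y, cU⁻¹ * (q u y * Real.logb 2 (q u y) - q u y * Real.logb 2 (qb y))
      = cU⁻¹ * (-ent (q u)) - ∑ y, cU⁻¹ * (q u y * Real.logb 2 (qb y)) := by
    intro u
    have hsplit : ∀ y, cU⁻¹ * (q u y * Real.logb 2 (q u y) - q u y * Real.logb 2 (qb y))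
        = cU⁻¹ * (q u y * Real.logb 2 (q u y)) - cU⁻¹ * (q u y * Real.logb 2 (qb y)) :=
      fun y => by ring
    rw [Finset.sum_congr rfl (fun y _ => hsplit y), Finset.sum_sub_distrib]
    congr 1
    unfold ent
    rw [neg_neg, Finset.mul_sum]
  rw [Finset.sum_congr rfl (fun u _ => split u), Finset.sum_sub_distrib]
  have h2 : ∑ u, ∑ y, cU⁻¹ * (q u y * Real.logb 2 (qb y)) = -ent qb := by
    rw [Finset.sum_comm]
    unfold ent
    rw [neg_neg]
    refine Finset.sum_congr rfl fun y _ => ?_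
    have hstep : ∑ u, cU⁻¹ * (q u y * Real.logb 2 (qb y))
        = (cU⁻¹ * ∑ u, q u y) * Real.logb 2 (qb y) := by
      rw [Finset.mul_sum, Finset.sum_mul]
      exact Finset.sum_congr rfl fun u _ => by ring
    rw [hstep]
  rw [h2]
  have h3 : ∑ u, cU⁻¹ * (-ent (q u)) = -(cU⁻¹ * ∑ u, ent (q u)) := by
    rw [Finset.mul_sum, ← Finset.sum_neg_distrib]
    exact Finset.sum_congr rfl fun u _ => by ring
  rw [h3]
  ring

lemma out_prob {X Y : Type*} [Fintype X] [Fintype Y] {m : ℕ} {K : Fin m → X → Y → ℝ}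
    (hK : ∀ i, IsChannel (K i)) {μ : (Fin m → X) → ℝ} (hμ : IsProb μ) :
    IsProb (out m K μ) :=
  ⟨out_nonneg (fun i x y => (hK i x).1 y) hμ.1, by rw [sum_out m K hK μ, hμ.2]⟩

lemma out_avg {X Y U : Type*} [Fintype X] [Fintype U] {n : ℕ} (K : Fin n → X → Y → ℝ)
    (E : U → (Fin n → X) → ℝ) (c : ℝ) (y : Fin n → Y) :
    out n K (fun x => c * ∑ u, E u x) y = c * ∑ u, out n K (E u) y := by
  unfold out
  calc ∑ x : Fin n → X, (c * ∑ u, E u x) * ∏ i, K i (x i) (y i)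
      = ∑ x : Fin n → X, ∑ u, c * E u x * ∏ i, K i (x i) (y i) := by
        refine Finset.sum_congr rfl fun x _ => ?_
        rw [Finset.mul_sum, Finset.sum_mul]
    _ = ∑ u, ∑ x : Fin n → X, c * E u x * ∏ i, K i (x i) (y i) := Finset.sum_comm
    _ = c * ∑ u, ∑ x : Fin n → X, E u x * ∏ i, K i (x i) (y i) := by
        rw [Finset.mul_sum]
        refine Finset.sum_congr rfl fun u _ => ?_
        rw [Finset.mul_sum]
        exact Finset.sum_congr rfl fun x _ => by ring

/-- Averaged input distribution is a probability distribution. -/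
lemma avg_prob {X : Type*} [Fintype X] {n k : ℕ} (E : Fin (k+1) → (Fin n → X) → ℝ)
    (hE : ∀ u, IsProb (E u)) :
    IsProb (fun x : Fin n → X => (Fintype.card (Fin (k+1)) : ℝ)⁻¹ * ∑ u, E u x) := by
  constructor
  · intro x
    have : (0:ℝ) ≤ ∑ u, E u x := Finset.sum_nonneg fun u _ => (hE u).1 x
    positivity
  · rw [← Finset.mul_sum, Finset.sum_comm]
    rw [Finset.sum_congr rfl (fun u (_ : u ∈ univ) => (hE u).2)]
    rw [Finset.sum_const, Finset.card_univ, nsmul_eq_mul, mul_one]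
    rw [inv_mul_cancel₀ (by positivity)]

lemma mutInf_jointOut_bound {X Y : Type*} [Fintype X] [Fintype Y] {k n : ℕ}
    (Wc : X → Y → ℝ) (hWc : IsChannel Wc) (E : Fin (k+1) → (Fin n → X) → ℝ)
    (hE : ∀ u, IsProb (E u)) :
    |mutInf (jointOut n Wc E)| ≤ 2 * (Fintype.card (Fin n → Y) : ℝ) := by
  rw [mutInf_jointOut Wc hWc E hE]
  set cU : ℝ := (Fintype.card (Fin (k+1)) : ℝ) with hcU
  have hc : 0 < cU := by rw [hcU]; positivity
  set c2 : ℝ := 2 * (Fintype.card (Fin n → Y) : ℝ) with hc2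
  have hq : ∀ u, IsProb (out n (fun _ => Wc) (E u)) :=
    fun u => out_prob (fun _ => hWc) (hE u)
  have hqb : IsProb (fun y => cU⁻¹ * ∑ u, out n (fun _ => Wc) (E u) y) := by
    have := avg_prob (fun u => out n (fun _ => Wc) (E u)) hq
    constructor
    · intro y
      have : (0:ℝ) ≤ ∑ u, out n (fun _ => Wc) (E u) y :=
        Finset.sum_nonneg fun u _ => (hq u).1 y
      positivity
    · exact this.2
  have h1 : 0 ≤ ent (fun y => cU⁻¹ * ∑ u, out n (fun _ => Wc) (E u) y) :=
    ent_nonneg hqb.1 (isProb_le_one hqb)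
  have h2 : ent (fun y => cU⁻¹ * ∑ u, out n (fun _ => Wc) (E u) y) ≤ c2 :=
    ent_le hqb.1 (isProb_le_one hqb)
  have h3 : 0 ≤ cU⁻¹ * ∑ u, ent (out n (fun _ => Wc) (E u)) := by
    have : (0:ℝ) ≤ ∑ u, ent (out n (fun _ => Wc) (E u)) :=
      Finset.sum_nonneg fun u _ => ent_nonneg (hq u).1 (isProb_le_one (hq u))
    positivity
  have h4 : cU⁻¹ * ∑ u, ent (out n (fun _ => Wc) (E u)) ≤ c2 := by
    have hsum : ∑ u, ent (out n (fun _ => Wc) (E u)) ≤ cU * c2 := by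
      calc ∑ u, ent (out n (fun _ => Wc) (E u)) ≤ ∑ _u : Fin (k+1), c2 :=
            Finset.sum_le_sum fun u _ => ent_le (hq u).1 (isProb_le_one (hq u))
        _ = cU * c2 := by rw [Finset.sum_const, Finset.card_univ, nsmul_eq_mul, hcU]
    calc cU⁻¹ * ∑ u, ent (out n (fun _ => Wc) (E u)) ≤ cU⁻¹ * (cU * c2) :=
          mul_le_mul_of_nonneg_left hsum (by positivity)
      _ = c2 := by field_simp
  rw [abs_sub_le_iff]
  constructor <;> linarith

lemma mutInf_compare {X Y : Type*} [Fintype X] [Fintype Y] {δ ω : ℝ} (hω : 0 ≤ ω)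
    (hmod : ∀ p q : Y → ℝ, IsProb p → IsProb q → (∑ y, |p y - q y|) ≤ δ →
      |ent p - ent q| ≤ ω)
    (Wc Wc' : X → Y → ℝ) (hWc : IsChannel Wc) (hWc' : IsChannel Wc')
    (hd : ∀ x, (∑ y, |Wc x y - Wc' x y|) ≤ δ)
    (n k : ℕ) (E : Fin (k+1) → (Fin n → X) → ℝ) (hE : ∀ u, IsProb (E u)) :
    |mutInf (jointOut n Wc E) - mutInf (jointOut n Wc' E)| ≤ 2 * (n * ω) := by
  rw [mutInf_jointOut Wc hWc E hE, mutInf_jointOut Wc' hWc' E hE]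
  set cU : ℝ := (Fintype.card (Fin (k+1)) : ℝ) with hcU
  have hc : 0 < cU := by rw [hcU]; positivity
  have hcont := out_ent_cont hω hmod n (fun _ => Wc) (fun _ => Wc')
    (fun _ => hWc) (fun _ => hWc') (fun _ x => hd x)
  have hbar : |ent (fun y => cU⁻¹ * ∑ u, out n (fun _ => Wc) (E u) y)
      - ent (fun y => cU⁻¹ * ∑ u, out n (fun _ => Wc') (E u) y)| ≤ n * ω := by
    have e1 : (fun y => cU⁻¹ * ∑ u, out n (fun _ => Wc) (E u) y)
        = out n (fun _ => Wc) (fun x => cU⁻¹ * ∑ u, E u x) :=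
      funext fun y => (out_avg _ E cU⁻¹ y).symm
    have e2 : (fun y => cU⁻¹ * ∑ u, out n (fun _ => Wc') (E u) y)
        = out n (fun _ => Wc') (fun x => cU⁻¹ * ∑ u, E u x) :=
      funext fun y => (out_avg _ E cU⁻¹ y).symm
    rw [e1, e2]
    exact hcont _ (avg_prob E hE)
  have hind : |cU⁻¹ * ∑ u, ent (out n (fun _ => Wc) (E u))
      - cU⁻¹ * ∑ u, ent (out n (fun _ => Wc') (E u))| ≤ n * ω := by
    rw [← mul_sub, ← Finset.sum_sub_distrib, abs_mul, abs_of_pos (by positivity : (0:ℝ) < cU⁻¹)]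
    calc cU⁻¹ * |∑ u, (ent (out n (fun _ => Wc) (E u)) - ent (out n (fun _ => Wc') (E u)))|
        ≤ cU⁻¹ * ∑ u, |ent (out n (fun _ => Wc) (E u)) - ent (out n (fun _ => Wc') (E u))| :=
          mul_le_mul_of_nonneg_left (Finset.abs_sum_le_sum_abs _ _) (by positivity)
      _ ≤ cU⁻¹ * ∑ _u : Fin (k+1), (n * ω) := by
          refine mul_le_mul_of_nonneg_left (Finset.sum_le_sum fun u _ => ?_) (by positivity)
          exact hcont _ (hE u)
      _ = n * ω := by
          rw [Finset.sum_const, Finset.card_univ, nsmul_eq_mul, ← hcU, ← mul_assoc,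
            inv_mul_cancel₀ (ne_of_gt hc), one_mul]
  calc |ent (fun y => cU⁻¹ * ∑ u, out n (fun _ => Wc) (E u) y)
        - cU⁻¹ * ∑ u, ent (out n (fun _ => Wc) (E u))
      - (ent (fun y => cU⁻¹ * ∑ u, out n (fun _ => Wc') (E u) y)
        - cU⁻¹ * ∑ u, ent (out n (fun _ => Wc') (E u)))|
      ≤ |ent (fun y => cU⁻¹ * ∑ u, out n (fun _ => Wc) (E u) y)
        - ent (fun y => cU⁻¹ * ∑ u, out n (fun _ => Wc') (E u) y)|
        + |cU⁻¹ * ∑ u, ent (out n (fun _ => Wc) (E u))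
          - cU⁻¹ * ∑ u, ent (out n (fun _ => Wc') (E u))| := by
        rw [sub_sub_sub_comm]
        exact abs_sub _ _
    _ ≤ n * ω + n * ω := add_le_add hbar hind
    _ = 2 * (n * ω) := by ring

lemma dChan_nonneg {X Y : Type*} [Fintype Y] (W W' : X → Y → ℝ) : 0 ≤ dChan W W' :=
  Real.iSup_nonneg fun x => Finset.sum_nonneg fun y _ => abs_nonneg _

lemma row_tv_le_two {X Y : Type*} [Fintype Y] {W W' : X → Y → ℝ}
    (hW : IsChannel W) (hW' : IsChannel W') (x : X) :
    ∑ y, |W x y - W' x y| ≤ 2 := by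
  calc ∑ y, |W x y - W' x y| ≤ ∑ y, (W x y + W' x y) := by
        refine Finset.sum_le_sum fun y _ => ?_
        calc |W x y - W' x y| ≤ |W x y| + |W' x y| := abs_sub _ _
          _ = W x y + W' x y := by
              rw [abs_of_nonneg ((hW x).1 y), abs_of_nonneg ((hW' x).1 y)]
    _ = 2 := by rw [Finset.sum_add_distrib, (hW x).2, (hW' x).2]; norm_num

lemma dChan_le_two {X Y : Type*} [Fintype Y] {W W' : X → Y → ℝ}
    (hW : IsChannel W) (hW' : IsChannel W') : dChan W W' ≤ 2 :=
  Real.iSup_le (fun x => row_tv_le_two hW hW' x) (by norm_num)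

lemma row_le_dChan {X Y : Type*} [Fintype Y] {W W' : X → Y → ℝ}
    (hW : IsChannel W) (hW' : IsChannel W') (x : X) :
    ∑ y, |W x y - W' x y| ≤ dChan W W' :=
  le_ciSup (f := fun x => ∑ y, |W x y - W' x y|)
    ⟨2, by rintro _ ⟨x', rfl⟩; exact row_tv_le_two hW hW' x'⟩ x

lemma exists_close {X Y : Type*} [Fintype Y] {S₁ S₂ : Type*} [Nonempty S₂]
    {W₁ : S₁ → X → Y → ℝ} {W₂ : S₂ → X → Y → ℝ} {δ : ℝ}
    (hW₁ : ∀ s, IsChannel (W₁ s)) (hW₂ : ∀ s, IsChannel (W₂ s))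
    (h : (⨆ s₁ : S₁, ⨅ s₂ : S₂, dChan (W₁ s₁) (W₂ s₂)) < δ) (s₁ : S₁) :
    ∃ s₂, ∀ x, ∑ y, |W₁ s₁ x y - W₂ s₂ x y| ≤ δ := by
  have hbdd : BddAbove (Set.range fun s₁ => ⨅ s₂ : S₂, dChan (W₁ s₁) (W₂ s₂)) := by
    refine ⟨2, ?_⟩
    rintro _ ⟨t₁, rfl⟩
    exact ciInf_le_of_le ⟨0, by rintro _ ⟨t₂, rfl⟩; exact dChan_nonneg _ _⟩
      (Classical.arbitrary S₂) (dChan_le_two (hW₁ t₁) (hW₂ _))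
  have h1 : (⨅ s₂ : S₂, dChan (W₁ s₁) (W₂ s₂)) < δ :=
    lt_of_le_of_lt (le_ciSup hbdd s₁) h
  obtain ⟨s₂, hs₂⟩ := exists_lt_of_ciInf_lt h1
  exact ⟨s₂, fun x => le_trans (row_le_dChan (hW₁ s₁) (hW₂ s₂) x) hs₂.le⟩

lemma iInf_compare {S₁ S₂ : Type*} [Nonempty S₁] [Nonempty S₂]
    (f : S₁ → ℝ) (g : S₂ → ℝ) (B c : ℝ)
    (hfB : ∀ s, |f s| ≤ B) (hgB : ∀ s, |g s| ≤ B)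
    (h12 : ∀ s₁, ∃ s₂, |f s₁ - g s₂| ≤ c) (h21 : ∀ s₂, ∃ s₁, |f s₁ - g s₂| ≤ c) :
    |(⨅ s, f s) - ⨅ s, g s| ≤ c := by
  have hbf : BddBelow (Set.range f) := ⟨-B, by rintro _ ⟨s, rfl⟩; linarith [(abs_le.1 (hfB s)).1]⟩
  have hbg : BddBelow (Set.range g) := ⟨-B, by rintro _ ⟨s, rfl⟩; linarith [(abs_le.1 (hgB s)).1]⟩
  have h1 : (⨅ s, f s) - c ≤ ⨅ s, g s := by
    refine le_ciInf fun s₂ => ?_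
    obtain ⟨s₁, hs⟩ := h21 s₂
    have := ciInf_le hbf s₁
    have := (abs_le.1 hs).2
    linarith
  have h2 : (⨅ s, g s) - c ≤ ⨅ s, f s := by
    refine le_ciInf fun s₁ => ?_
    obtain ⟨s₂, hs⟩ := h12 s₁
    have := ciInf_le hbg s₂
    have := (abs_le.1 hs).1
    linarith
  rw [abs_sub_le_iff]
  constructor <;> linarith

lemma iSup_compare {S₁ S₂ : Type*} [Nonempty S₁] [Nonempty S₂]
    (f : S₁ → ℝ) (g : S₂ → ℝ) (B c : ℝ)
    (hfB : ∀ s, |f s| ≤ B) (hgB : ∀ s, |g s| ≤ B)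
    (h12 : ∀ s₁, ∃ s₂, |f s₁ - g s₂| ≤ c) (h21 : ∀ s₂, ∃ s₁, |f s₁ - g s₂| ≤ c) :
    |(⨆ s, f s) - ⨆ s, g s| ≤ c := by
  have hbf : BddAbove (Set.range f) := ⟨B, by rintro _ ⟨s, rfl⟩; linarith [(abs_le.1 (hfB s)).2]⟩
  have hbg : BddAbove (Set.range g) := ⟨B, by rintro _ ⟨s, rfl⟩; linarith [(abs_le.1 (hgB s)).2]⟩
  have h1 : (⨆ s, f s) ≤ (⨆ s, g s) + c := by
    refine ciSup_le fun s₁ => ?_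
    obtain ⟨s₂, hs⟩ := h12 s₁
    have := le_ciSup hbg s₂
    have := (abs_le.1 hs).2
    linarith
  have h2 : (⨆ s, g s) ≤ (⨆ s, f s) + c := by
    refine ciSup_le fun s₂ => ?_
    obtain ⟨s₁, hs⟩ := h21 s₂
    have := le_ciSup hbf s₁
    have := (abs_le.1 hs).1
    linarith
  rw [abs_sub_le_iff]
  constructor <;> linarith

lemma dChan_comm {X Y : Type*} [Fintype Y] (W W' : X → Y → ℝ) : dChan W W' = dChan W' W := by
  unfold dChan
  congr 1
  funext x
  exact Finset.sum_congr rfl fun y _ => abs_sub_comm _ _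

lemma expr_le_bound {X Y Z : Type*} [Fintype X] [Fintype Y] [Fintype Z]
    {S : Type*} [Nonempty S] (n : ℕ)
    (W : S → X → Y → ℝ) (V : S → X → Z → ℝ)
    (hW : ∀ s, IsChannel (W s)) (hV : ∀ s, IsChannel (V s))
    (k : ℕ) (E : Fin (k + 1) → (Fin n → X) → ℝ) (hE : ∀ u, IsProb (E u)) :
    (⨅ s, mutInf (jointOut n (W s) E)) - (⨆ s, mutInf (jointOut n (V s) E))
      ≤ 2 * (Fintype.card (Fin n → Y) : ℝ) + 2 * (Fintype.card (Fin n → Z) : ℝ) := by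
  obtain ⟨s₀⟩ := ‹Nonempty S›
  have hb1 : BddBelow (Set.range fun s => mutInf (jointOut n (W s) E)) := by
    refine ⟨-(2 * (Fintype.card (Fin n → Y) : ℝ)), ?_⟩
    rintro _ ⟨s, rfl⟩
    show -(2 * (Fintype.card (Fin n → Y) : ℝ)) ≤ mutInf (jointOut n (W s) E)
    linarith [(abs_le.1 (mutInf_jointOut_bound (W s) (hW s) E hE)).1]
  have hb2 : BddAbove (Set.range fun s => mutInf (jointOut n (V s) E)) := by
    refine ⟨2 * (Fintype.card (Fin n → Z) : ℝ), ?_⟩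
    rintro _ ⟨s, rfl⟩
    show mutInf (jointOut n (V s) E) ≤ 2 * (Fintype.card (Fin n → Z) : ℝ)
    exact (abs_le.1 (mutInf_jointOut_bound (V s) (hV s) E hE)).2
  have h1 : (⨅ s, mutInf (jointOut n (W s) E)) ≤ 2 * (Fintype.card (Fin n → Y) : ℝ) :=
    ciInf_le_of_le hb1 s₀ (abs_le.1 (mutInf_jointOut_bound (W s₀) (hW s₀) E hE)).2
  have h2 : -(2 * (Fintype.card (Fin n → Z) : ℝ)) ≤ ⨆ s, mutInf (jointOut n (V s) E) :=
    le_trans (abs_le.1 (mutInf_jointOut_bound (V s₀) (hV s₀) E hE)).1 (le_ciSup hb2 s₀)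
  linarith

lemma secF_compare {X Y Z : Type*} [Fintype X] [Fintype Y] [Fintype Z]
    {S₁ S₂ : Type*} [Nonempty S₁] [Nonempty S₂] [Nonempty X]
    (W₁ : S₁ → X → Y → ℝ) (V₁ : S₁ → X → Z → ℝ)
    (W₂ : S₂ → X → Y → ℝ) (V₂ : S₂ → X → Z → ℝ)
    (hW₁ : ∀ s, IsChannel (W₁ s)) (hV₁ : ∀ s, IsChannel (V₁ s))
    (hW₂ : ∀ s, IsChannel (W₂ s)) (hV₂ : ∀ s, IsChannel (V₂ s))
    {δ ωY ωZ : ℝ} (hωY : 0 ≤ ωY) (hωZ : 0 ≤ ωZ)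
    (hmodY : ∀ p q : Y → ℝ, IsProb p → IsProb q → (∑ y, |p y - q y|) ≤ δ →
      |ent p - ent q| ≤ ωY)
    (hmodZ : ∀ p q : Z → ℝ, IsProb p → IsProb q → (∑ z, |p z - q z|) ≤ δ →
      |ent p - ent q| ≤ ωZ)
    (hD : Dcwc W₁ V₁ W₂ V₂ < δ) (m : ℕ) :
    |secF W₁ V₁ m - secF W₂ V₂ m| ≤ 2 * ωY + 2 * ωZ := by
  rcases m with _ | m
  · simp only [secF, Nat.cast_zero, div_zero, zero_mul, sub_zero, abs_zero]
    positivity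
  set n : ℕ := m + 1 with hn
  -- extract the four closeness properties
  have hDa : (⨆ s₂ : S₂, ⨅ s₁ : S₁, dChan (W₁ s₁) (W₂ s₂)) < δ :=
    lt_of_le_of_lt (le_trans (le_max_left _ _) (le_max_left _ _)) hD
  have hDb : (⨆ s₁ : S₁, ⨅ s₂ : S₂, dChan (W₁ s₁) (W₂ s₂)) < δ :=
    lt_of_le_of_lt (le_trans (le_max_right _ _) (le_max_left _ _)) hD
  have hDc : (⨆ s₂ : S₂, ⨅ s₁ : S₁, dChan (V₁ s₁) (V₂ s₂)) < δ :=
    lt_of_le_of_lt (le_trans (le_max_left _ _) (le_max_right _ _)) hD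
  have hDd : (⨆ s₁ : S₁, ⨅ s₂ : S₂, dChan (V₁ s₁) (V₂ s₂)) < δ :=
    lt_of_le_of_lt (le_trans (le_max_right _ _) (le_max_right _ _)) hD
  have hW12 : ∀ s₁, ∃ s₂, ∀ x, ∑ y, |W₁ s₁ x y - W₂ s₂ x y| ≤ δ :=
    fun s₁ => exists_close hW₁ hW₂ hDb s₁
  have hDa' : (⨆ s₂ : S₂, ⨅ s₁ : S₁, dChan (W₂ s₂) (W₁ s₁)) < δ := by
    have he : (fun s₂ : S₂ => ⨅ s₁ : S₁, dChan (W₂ s₂) (W₁ s₁))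
        = fun s₂ : S₂ => ⨅ s₁ : S₁, dChan (W₁ s₁) (W₂ s₂) := by
      funext s₂
      exact iInf_congr fun s₁ => dChan_comm _ _
    rw [iSup, he, ← iSup]
    exact hDa
  have hDc' : (⨆ s₂ : S₂, ⨅ s₁ : S₁, dChan (V₂ s₂) (V₁ s₁)) < δ := by
    have he : (fun s₂ : S₂ => ⨅ s₁ : S₁, dChan (V₂ s₂) (V₁ s₁))
        = fun s₂ : S₂ => ⨅ s₁ : S₁, dChan (V₁ s₁) (V₂ s₂) := by
      funext s₂
      exact iInf_congr fun s₁ => dChan_comm _ _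
    rw [iSup, he, ← iSup]
    exact hDc
  have hW21 : ∀ s₂, ∃ s₁, ∀ x, ∑ y, |W₂ s₂ x y - W₁ s₁ x y| ≤ δ :=
    fun s₂ => exists_close hW₂ hW₁ hDa' s₂
  have hV12 : ∀ s₁, ∃ s₂, ∀ x, ∑ z, |V₁ s₁ x z - V₂ s₂ x z| ≤ δ :=
    fun s₁ => exists_close hV₁ hV₂ hDd s₁
  have hV21 : ∀ s₂, ∃ s₁, ∀ x, ∑ z, |V₂ s₂ x z - V₁ s₁ x z| ≤ δ :=
    fun s₂ => exists_close hV₂ hV₁ hDc' s₂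
  -- bounds
  set BY : ℝ := 2 * (Fintype.card (Fin n → Y) : ℝ) with hBY
  set BZ : ℝ := 2 * (Fintype.card (Fin n → Z) : ℝ) with hBZ
  set cB : ℝ := 2 * ((n : ℝ) * ωY) + 2 * ((n : ℝ) * ωZ) with hcB
  have hcB0 : 0 ≤ cB := by positivity
  -- the two supremum sets
  set A₁ : Set ℝ := {r : ℝ | ∃ (k : ℕ) (E : Fin (k + 1) → (Fin n → X) → ℝ),
    (∀ u, (∀ xn, 0 ≤ E u xn) ∧ ∑ xn : Fin n → X, E u xn = 1) ∧
    r = (⨅ s : S₁, mutInf (jointOut n (W₁ s) E)) - ⨆ s : S₁, mutInf (jointOut n (V₁ s) E)}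
    with hA₁
  set A₂ : Set ℝ := {r : ℝ | ∃ (k : ℕ) (E : Fin (k + 1) → (Fin n → X) → ℝ),
    (∀ u, (∀ xn, 0 ≤ E u xn) ∧ ∑ xn : Fin n → X, E u xn = 1) ∧
    r = (⨅ s : S₂, mutInf (jointOut n (W₂ s) E)) - ⨆ s : S₂, mutInf (jointOut n (V₂ s) E)}
    with hA₂
  -- a default encoder
  have hcardX : (0:ℝ) < (Fintype.card (Fin n → X) : ℝ) := by
    have : 0 < Fintype.card (Fin n → X) := Fintype.card_pos
    exact_mod_cast this
  have hE₀ : ∀ u : Fin 1, (∀ xn : Fin n → X, 0 ≤ (Fintype.card (Fin n → X) : ℝ)⁻¹)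
      ∧ ∑ _xn : Fin n → X, (Fintype.card (Fin n → X) : ℝ)⁻¹ = 1 := by
    intro u
    constructor
    · intro _; positivity
    · rw [Finset.sum_const, Finset.card_univ, nsmul_eq_mul,
        mul_inv_cancel₀ (ne_of_gt hcardX)]
  have hA₁ne : A₁.Nonempty := by
    refine ⟨_, ⟨0, fun _ _ => (Fintype.card (Fin n → X) : ℝ)⁻¹, fun u => hE₀ u, rfl⟩⟩
  have hA₂ne : A₂.Nonempty := by
    refine ⟨_, ⟨0, fun _ _ => (Fintype.card (Fin n → X) : ℝ)⁻¹, fun u => hE₀ u, rfl⟩⟩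
  -- elements of the sets are bounded
  have hbound1 : ∀ (k : ℕ) (E : Fin (k + 1) → (Fin n → X) → ℝ), (∀ u, IsProb (E u)) →
      (⨅ s, mutInf (jointOut n (W₁ s) E)) - (⨆ s, mutInf (jointOut n (V₁ s) E))
        ≤ BY + BZ := by
    intro k E hE
    exact expr_le_bound n W₁ V₁ hW₁ hV₁ k E hE
  have hbound2 : ∀ (k : ℕ) (E : Fin (k + 1) → (Fin n → X) → ℝ), (∀ u, IsProb (E u)) →
      (⨅ s, mutInf (jointOut n (W₂ s) E)) - (⨆ s, mutInf (jointOut n (V₂ s) E))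
        ≤ BY + BZ := by
    intro k E hE
    exact expr_le_bound n W₂ V₂ hW₂ hV₂ k E hE
  have hA₁bdd : BddAbove A₁ := by
    refine ⟨BY + BZ, ?_⟩
    rintro r ⟨k, E, hE, rfl⟩
    exact hbound1 k E (fun u => hE u)
  have hA₂bdd : BddAbove A₂ := by
    refine ⟨BY + BZ, ?_⟩
    rintro r ⟨k, E, hE, rfl⟩
    exact hbound2 k E (fun u => hE u)
  -- pointwise comparison of the defining expressions
  have hpt : ∀ (k : ℕ) (E : Fin (k + 1) → (Fin n → X) → ℝ), (∀ u, IsProb (E u)) →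
      |((⨅ s, mutInf (jointOut n (W₁ s) E)) - ⨆ s, mutInf (jointOut n (V₁ s) E))
        - ((⨅ s, mutInf (jointOut n (W₂ s) E)) - ⨆ s, mutInf (jointOut n (V₂ s) E))| ≤ cB := by
    intro k E hE
    have hinf : |(⨅ s, mutInf (jointOut n (W₁ s) E)) - ⨅ s, mutInf (jointOut n (W₂ s) E)|
        ≤ 2 * ((n : ℝ) * ωY) := by
      refine iInf_compare _ _ BY _
        (fun s => mutInf_jointOut_bound (W₁ s) (hW₁ s) E hE)
        (fun s => mutInf_jointOut_bound (W₂ s) (hW₂ s) E hE) ?_ ?_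
      · intro s₁
        obtain ⟨s₂, hs⟩ := hW12 s₁
        exact ⟨s₂, mutInf_compare hωY hmodY (W₁ s₁) (W₂ s₂) (hW₁ s₁) (hW₂ s₂) hs n k E hE⟩
      · intro s₂
        obtain ⟨s₁, hs⟩ := hW21 s₂
        refine ⟨s₁, ?_⟩
        rw [abs_sub_comm]
        exact mutInf_compare hωY hmodY (W₂ s₂) (W₁ s₁) (hW₂ s₂) (hW₁ s₁) hs n k E hE
    have hsup : |(⨆ s, mutInf (jointOut n (V₁ s) E)) - ⨆ s, mutInf (jointOut n (V₂ s) E)|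
        ≤ 2 * ((n : ℝ) * ωZ) := by
      refine iSup_compare _ _ BZ _
        (fun s => mutInf_jointOut_bound (V₁ s) (hV₁ s) E hE)
        (fun s => mutInf_jointOut_bound (V₂ s) (hV₂ s) E hE) ?_ ?_
      · intro s₁
        obtain ⟨s₂, hs⟩ := hV12 s₁
        exact ⟨s₂, mutInf_compare hωZ hmodZ (V₁ s₁) (V₂ s₂) (hV₁ s₁) (hV₂ s₂) hs n k E hE⟩
      · intro s₂
        obtain ⟨s₁, hs⟩ := hV21 s₂
        refine ⟨s₁, ?_⟩
        rw [abs_sub_comm]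
        exact mutInf_compare hωZ hmodZ (V₂ s₂) (V₁ s₁) (hV₂ s₂) (hV₁ s₁) hs n k E hE
    set a1 := ⨅ s, mutInf (jointOut n (W₁ s) E)
    set a2 := ⨅ s, mutInf (jointOut n (W₂ s) E)
    set b1 := ⨆ s, mutInf (jointOut n (V₁ s) E)
    set b2 := ⨆ s, mutInf (jointOut n (V₂ s) E)
    calc |a1 - b1 - (a2 - b2)| = |(a1 - a2) + (b2 - b1)| := by ring_nf
      _ ≤ |a1 - a2| + |b2 - b1| := abs_add_le _ _
      _ = |a1 - a2| + |b1 - b2| := by rw [abs_sub_comm b2 b1]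
      _ ≤ cB := by rw [hcB]; exact add_le_add hinf hsup
  -- compare the suprema
  have hsup12 : sSup A₁ ≤ sSup A₂ + cB := by
    refine csSup_le hA₁ne ?_
    rintro r ⟨k, E, hE, rfl⟩
    have h := hpt k E (fun u => hE u)
    have hmem : ((⨅ s, mutInf (jointOut n (W₂ s) E)) - ⨆ s, mutInf (jointOut n (V₂ s) E)) ∈ A₂ :=
      ⟨k, E, hE, rfl⟩
    have := le_csSup hA₂bdd hmem
    have := (abs_le.1 h).2
    linarith
  have hsup21 : sSup A₂ ≤ sSup A₁ + cB := by
    refine csSup_le hA₂ne ?_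
    rintro r ⟨k, E, hE, rfl⟩
    have h := hpt k E (fun u => hE u)
    have hmem : ((⨅ s, mutInf (jointOut n (W₁ s) E)) - ⨆ s, mutInf (jointOut n (V₁ s) E)) ∈ A₁ :=
      ⟨k, E, hE, rfl⟩
    have := le_csSup hA₁bdd hmem
    have := (abs_le.1 h).1
    linarith
  -- conclude
  have hsecF1 : secF W₁ V₁ n = (1 / (n : ℝ)) * sSup A₁ := rfl
  have hsecF2 : secF W₂ V₂ n = (1 / (n : ℝ)) * sSup A₂ := rfl
  rw [hsecF1, hsecF2, ← mul_sub, abs_mul]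
  have hn0 : (0:ℝ) < (n : ℝ) := by exact_mod_cast Nat.succ_pos m
  have habs : |1 / (n : ℝ)| = 1 / (n : ℝ) := abs_of_pos (by positivity)
  rw [habs]
  have hss : |sSup A₁ - sSup A₂| ≤ cB := by
    rw [abs_sub_le_iff]
    constructor <;> linarith
  calc (1 / (n : ℝ)) * |sSup A₁ - sSup A₂| ≤ (1 / (n : ℝ)) * cB :=
        mul_le_mul_of_nonneg_left hss (by positivity)
    _ = 2 * ωY + 2 * ωZ := by
        rw [hcB]
        field_simp

lemma secF_of_isEmpty {X Y Z : Type*} [Fintype X] [Fintype Y] [Fintype Z] {S : Type*}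
    (hX : IsEmpty X) (W : S → X → Y → ℝ) (V : S → X → Z → ℝ) (m : ℕ) :
    secF W V m = 0 := by
  rcases m with _ | m
  · simp [secF]
  haveI hem : IsEmpty (Fin (m+1) → X) := ⟨fun f => hX.elim (f 0)⟩
  have hset : {r : ℝ | ∃ (k : ℕ) (E : Fin (k + 1) → (Fin (m+1) → X) → ℝ),
      (∀ u, (∀ xn, 0 ≤ E u xn) ∧ ∑ xn : Fin (m+1) → X, E u xn = 1) ∧
      r = (⨅ s : S, mutInf (jointOut (m+1) (W s) E))
        - ⨆ s : S, mutInf (jointOut (m+1) (V s) E)} = ∅ := by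
    ext r
    simp only [Set.mem_setOf_eq, Set.mem_empty_iff_false, iff_false]
    rintro ⟨k, E, hE, _⟩
    have := (hE 0).2
    rw [Finset.univ_eq_empty, Finset.sum_empty] at this
    norm_num at this
  unfold secF
  rw [hset, Real.sSup_empty, mul_zero]

/-- if compound wiretap channels `𝔚_n` converge to `𝔚` in `D`-distance, then
their multi-letter secrecy capacities converge to that of `𝔚`. -/
theorem compound_secrecy_capacity_limit {X Y Z : Type*}
    [Fintype X] [Fintype Y] [Fintype Z] {S : Type*} [Nonempty S]
    {S' : ℕ → Type*} [∀ n, Nonempty (S' n)]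
    (W : S → X → Y → ℝ) (V : S → X → Z → ℝ)
    (Wn : ∀ n, S' n → X → Y → ℝ) (Vn : ∀ n, S' n → X → Z → ℝ)
    (hW : ∀ s, IsChannel (W s)) (hV : ∀ s, IsChannel (V s))
    (hWn : ∀ n s, IsChannel (Wn n s)) (hVn : ∀ n s, IsChannel (Vn n s))
    (hD : Filter.Tendsto (fun n : ℕ => Dcwc W V (Wn n) (Vn n)) Filter.atTop (nhds 0))
    (C : ℝ) (Cn : ℕ → ℝ)
    (hC : Filter.Tendsto (fun m : ℕ => secF W V m) Filter.atTop (nhds C))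
    (hCn : ∀ n, Filter.Tendsto (fun m : ℕ => secF (Wn n) (Vn n) m) Filter.atTop (nhds (Cn n))) :
    Filter.Tendsto Cn Filter.atTop (nhds C) := by

  rcases isEmpty_or_nonempty X with hX | hX
  · -- degenerate case : empty input alphabet
    have hWz : (fun m : ℕ => secF W V m) = fun _ => (0:ℝ) :=
      funext fun m => secF_of_isEmpty hX W V m
    rw [hWz] at hC
    have hC0 : C = 0 := tendsto_nhds_unique hC tendsto_const_nhds
    have hCn0 : ∀ n, Cn n = 0 := by
      intro n
      have hWz' : (fun m : ℕ => secF (Wn n) (Vn n) m) = fun _ => (0:ℝ) :=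
        funext fun m => secF_of_isEmpty hX (Wn n) (Vn n) m
      have h := hCn n
      rw [hWz'] at h
      exact tendsto_nhds_unique h tendsto_const_nhds
    have : Cn = fun _ => (0:ℝ) := funext hCn0
    rw [this, hC0]
    exact tendsto_const_nhds
  · -- main case
    obtain ⟨x₀⟩ := hX
    haveI : Nonempty X := ⟨x₀⟩
    haveI : Nonempty Y := by
      rcases isEmpty_or_nonempty Y with hY | hY
      · exfalso
        have := (hW (Classical.arbitrary S) x₀).2
        rw [Finset.univ_eq_empty, Finset.sum_empty] at this
        norm_num at this
      · exact hY
    haveI : Nonempty Z := by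
      rcases isEmpty_or_nonempty Z with hZ | hZ
      · exfalso
        have := (hV (Classical.arbitrary S) x₀).2
        rw [Finset.univ_eq_empty, Finset.sum_empty] at this
        norm_num at this
      · exact hZ
    rw [Metric.tendsto_atTop]
    intro ε hε
    obtain ⟨δY, hδY, hmodY⟩ := ent_UC Y (show (0:ℝ) < ε/5 by linarith)
    obtain ⟨δZ, hδZ, hmodZ⟩ := ent_UC Z (show (0:ℝ) < ε/5 by linarith)
    set δ : ℝ := min δY δZ with hδdef
    have hδ : 0 < δ := lt_min hδY hδZ
    have hmodY' : ∀ p q : Y → ℝ, IsProb p → IsProb q → (∑ y, |p y - q y|) ≤ δ →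
        |ent p - ent q| ≤ ε/5 :=
      fun p q hp hq h => hmodY p q hp hq (le_trans h (min_le_left _ _))
    have hmodZ' : ∀ p q : Z → ℝ, IsProb p → IsProb q → (∑ z, |p z - q z|) ≤ δ →
        |ent p - ent q| ≤ ε/5 :=
      fun p q hp hq h => hmodZ p q hp hq (le_trans h (min_le_right _ _))
    obtain ⟨N, hN⟩ := (Metric.tendsto_atTop).mp hD δ hδ
    refine ⟨N, fun n hn => ?_⟩
    have hDlt : Dcwc W V (Wn n) (Vn n) < δ := by
      have := hN n hn
      rw [Real.dist_eq, sub_zero] at this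
      exact lt_of_le_of_lt (le_abs_self _) this
    have hcomp : ∀ m : ℕ, |secF W V m - secF (Wn n) (Vn n) m| ≤ 2 * (ε/5) + 2 * (ε/5) :=
      fun m => secF_compare W V (Wn n) (Vn n) hW hV (hWn n) (hVn n)
        (by linarith) (by linarith) hmodY' hmodZ' hDlt m
    have hlim : Filter.Tendsto (fun m : ℕ => |secF W V m - secF (Wn n) (Vn n) m|)
        Filter.atTop (nhds |C - Cn n|) := (hC.sub (hCn n)).abs
    have habs : |C - Cn n| ≤ 2 * (ε/5) + 2 * (ε/5) :=
      le_of_tendsto hlim (Filter.Eventually.of_forall hcomp)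
    rw [Real.dist_eq, abs_sub_comm]
    calc |C - Cn n| ≤ 2 * (ε/5) + 2 * (ε/5) := habs
      _ < ε := by linarith
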